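/- Every 2-connected outerplanar graph that is not a cycle contains an ear: an induced cycle (u_1, u_2, ..., u_r) with r ≥ 3 such that d_G(u_i) = 2 for all 2 ≤ i ≤ r − 1 and d_G(u_1), d_G(u_r) ≥ 3. -/

import Mathlib

variable {V : Type*} [Fintype V] [DecidableEq V]

/-- Out-degree of `v` in the digraph (arc set) `D`. -/
def outDeg (D : Finset (V × V)) (v : V) : ℕ := (D.filter fun a => a.1 = v).card

/-- In-degree of `v` in the digraph (arc set) `D`. -/
def inDeg (D : Finset (V × V)) (v : V) : ℕ := (D.filter fun a => a.2 = v).card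

/-- An arc set is Eulerian if every vertex has equal in- and out-degree. -/
def IsEulerian (H : Finset (V × V)) : Prop := ∀ v, outDeg H v = inDeg H v

instance (H : Finset (V × V)) : Decidable (IsEulerian H) := by
  unfold IsEulerian; infer_instance

/-- The Eulerian subdigraphs of `D`. -/
def eulerianSubs (D : Finset (V × V)) : Finset (Finset (V × V)) :=
  D.powerset.filter IsEulerian

/-- `D` is an AT-orientation: the number of even Eulerian subdigraphs differs from
the number of odd ones. -/
def IsAT (D : Finset (V × V)) : Prop :=
  ((eulerianSubs D).filter fun H => Even H.card).card ≠
    ((eulerianSubs D).filter fun H => Odd H.card).card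

/-- `D` is an orientation of the graph `G`: every arc is an edge of `G`,
and each edge of `G` gets exactly one direction. -/
def IsOrientation (G : SimpleGraph V) (D : Finset (V × V)) : Prop :=
  (∀ a ∈ D, G.Adj a.1 a.2) ∧ ∀ u v : V, G.Adj u v → ((u, v) ∈ D ↔ (v, u) ∉ D)

/-- `D` contains a directed closed walk, equivalently a directed cycle. -/
def HasDirCycle (D : Finset (V × V)) : Prop :=
  ∃ (a : V) (l : List V), List.Chain (fun u v => (u, v) ∈ D) a (l ++ [a])

/-- Outerplanar: the vertices can be placed at distinct positions on a circle so that
all edges are pairwise noncrossing chords. -/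
def Outerplanar (G : SimpleGraph V) : Prop :=
  ∃ p : V → ℕ, Function.Injective p ∧ ∀ a b c d : V, G.Adj a b → G.Adj c d →
    ¬ (p a < p c ∧ p c < p b ∧ p b < p d)

/-- 2-connected: at least 3 vertices, connected, and deleting any vertex leaves it connected. -/
def TwoConnected (G : SimpleGraph V) : Prop :=
  3 ≤ Fintype.card V ∧ G.Connected ∧ ∀ v : V, (SimpleGraph.induce {w | w ≠ v} G).Connected

/-- `G` is a cycle: connected and 2-regular. -/
def IsCycleGraph (G : SimpleGraph V) [DecidableRel G.Adj] : Prop :=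
  G.Connected ∧ ∀ v, G.degree v = 2

/-- The arcs of a path/walk given by a list of vertices. -/
def pathArcs (l : List V) : Finset (V × V) := (l.zip l.tail).toFinset

/-- Weighted out-degree. -/
def wOutDeg (D : Finset (V × V)) (w : V × V → ℕ) (v : V) : ℕ :=
  ∑ a ∈ D.filter (fun a => a.1 = v), w a

/-- Weighted in-degree. -/
def wInDeg (D : Finset (V × V)) (w : V × V → ℕ) (v : V) : ℕ :=
  ∑ a ∈ D.filter (fun a => a.2 = v), w a

/-- Weighted Eulerian subdigraph. -/
def IsWEulerian (H : Finset (V × V)) (w : V × V → ℕ) : Prop :=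
  ∀ v, wOutDeg H w v = wInDeg H w v

section AuxEar
variable {W : Type*}

lemma earWalkInv {H : SimpleGraph W} (S : Set W) (hS : ∀ a b, H.Adj a b → a ∈ S → b ∈ S)
    {x y : W} (w : H.Walk x y) (hx : x ∈ S) : y ∈ S := by
  induction w with
  | nil => exact hx
  | cons h _ ih => exact ih (hS _ _ h hx)

lemma earCrossEdge {H : SimpleGraph W} (h : H.Connected) (S : Set W) {x y : W}
    (hx : x ∈ S) (hy : y ∉ S) : ∃ a ∈ S, ∃ b, b ∉ S ∧ H.Adj a b := by
  by_contra hc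
  push_neg at hc
  obtain ⟨w⟩ := h.preconnected x y
  exact hy (earWalkInv S (fun a b hab ha => by_contra fun hb => (hc a ha b hb) hab) w hx)

lemma earCutAbsurd {H : SimpleGraph W} {v : W}
    (hconn : (SimpleGraph.induce {w | w ≠ v} H).Connected)
    (S : Set W) {x y : W} (hx : x ∈ S) (hxv : x ≠ v) (hyv : y ≠ v) (hy : y ∉ S)
    (hpres : ∀ a b : W, a ≠ v → b ≠ v → H.Adj a b → a ∈ S → b ∈ S) : False := by
  obtain ⟨w⟩ := hconn.preconnected ⟨x, hxv⟩ ⟨y, hyv⟩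
  exact hy (earWalkInv {z : {w : W | w ≠ v} | z.1 ∈ S}
    (fun a b hab ha => hpres a.1 b.1 a.2 b.2 hab ha) w hx)

lemma earChainRange' (R : W → W → Prop) (F : ℕ → W) :
    ∀ (m s : ℕ) (c : W), (∀ k, s ≤ k → k < s + m → R (F k) (F (k + 1))) → R (F (s + m)) c →
      List.Chain R (F s) ((List.range' (s + 1) m).map F ++ [c]) := by
  intro m
  induction m with
  | zero =>
    intro s c _ hl
    simpa using List.Chain.cons (by simpa using hl) List.Chain.nil
  | succ m ih =>
    intro s c hk hl
    rw [List.range'_succ]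
    simp only [List.map_cons, List.cons_append, List.chain_cons]
    refine List.IsChain.cons_cons (hk s le_rfl (by omega)) ?_
    exact ih (s + 1) c (fun k h1 h2 => hk k (by omega) (by omega))
      (by rw [show s + 1 + m = s + (m + 1) by omega]; exact hl)

lemma earZipRange' : ∀ (m s : ℕ),
    (List.range' s m).zip (List.range' (s + 1) m) = (List.range' s m).map (fun k => (k, k + 1)) := by
  intro m
  induction m with
  | zero => intro s; simp
  | succ m ih =>
    intro s
    rw [List.range'_succ, List.range'_succ]
    simp only [List.zip_cons_cons, List.map_cons]
    rw [ih (s + 1)]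

end AuxEar

theorem stmt12 (G : SimpleGraph V) [DecidableRel G.Adj]
    (h2 : TwoConnected G) (hop : Outerplanar G) (hnc : ¬ IsCycleGraph G) :
    ∃ (u : V) (l : List V), l ≠ [] ∧ (u :: l).Nodup ∧ 3 ≤ (u :: l).length ∧
      List.Chain G.Adj u (l ++ [u]) ∧
      (∀ x ∈ u :: l, ∀ y ∈ u :: l, G.Adj x y →
        ((x, y) ∈ (u :: l).zip (l ++ [u]) ∨ (y, x) ∈ (u :: l).zip (l ++ [u]))) ∧
      (∀ x ∈ l.dropLast, G.degree x = 2) ∧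
      3 ≤ G.degree u ∧ ∀ h : l ≠ [], 3 ≤ G.degree (l.getLast h) := by
  classical
  obtain ⟨hcard, hconn, hcut⟩ := h2
  obtain ⟨p, hp, hcross⟩ := hop
  haveI : Nonempty V := Fintype.card_pos_iff.mp (by omega)
  set n := Fintype.card V with hn
  set s : Finset ℕ := Finset.univ.image p with hsdef
  have hs : s.card = n := by
    rw [hsdef, Finset.card_image_of_injective _ hp, Finset.card_univ]
  set L : List ℕ := s.sort (· ≤ ·) with hLdef
  have hLlen : L.length = n := by rw [hLdef, Finset.length_sort, hs]
  have hLsorted : L.Pairwise (· < ·) := (Finset.sortedLT_sort s).pairwise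
  set F : ℕ → V := fun k => Function.invFun p (L.getD k 0) with hFdef
  have hgetmem : ∀ k, k < n → L.getD k 0 ∈ s := by
    intro k h
    have h' : k < L.length := by omega
    rw [List.getD_eq_getElem L 0 h']
    have : L[k] ∈ L := List.getElem_mem h'
    exact (Finset.mem_sort _).mp this
  have hpF : ∀ k, k < n → p (F k) = L.getD k 0 := by
    intro k h
    have := hgetmem k h
    rw [hsdef, Finset.mem_image] at this
    obtain ⟨a, _, ha⟩ := this
    rw [hFdef]
    exact Function.invFun_eq ⟨a, ha⟩
  have hFmono : ∀ a b, a < b → b < n → p (F a) < p (F b) := by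
    intro a b hab hbn
    rw [hpF a (by omega), hpF b hbn]
    have ha' : a < L.length := by omega
    have hb' : b < L.length := by omega
    rw [List.getD_eq_getElem L 0 ha', List.getD_eq_getElem L 0 hb']
    have := List.pairwise_iff_get.mp hLsorted ⟨a, ha'⟩ ⟨b, hb'⟩ (by simpa using hab)
    simpa using this
  have hFinj : ∀ a, a < n → ∀ b, b < n → F a = F b → a = b := by
    intro a ha b hb hab
    rcases lt_trichotomy a b with h | h | h
    · exact absurd (hFmono a b h hb) (by rw [hab]; omega)
    · exact h
    · exact absurd (hFmono b a h ha) (by rw [hab]; omega)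
  have hFsurj : ∀ v : V, ∃ k, k < n ∧ F k = v := by
    intro v
    have hv : p v ∈ s := by rw [hsdef]; exact Finset.mem_image_of_mem p (Finset.mem_univ v)
    have hvL : p v ∈ L := (Finset.mem_sort _).mpr hv
    obtain ⟨i, hi⟩ := List.mem_iff_get.mp hvL
    refine ⟨i, by omega, ?_⟩
    have hgd : L.getD (i : ℕ) 0 = p v := by
      rw [List.getD_eq_getElem L 0 (by omega)]
      simpa [List.get_eq_getElem] using hi
    rw [hFdef]
    simp only
    rw [hgd]
    exact Function.leftInverse_invFun hp v
  -- noncrossing in index form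
  have hnc4 : ∀ a c b d : ℕ, a < c → c < b → b < d → d < n →
      G.Adj (F a) (F b) → G.Adj (F c) (F d) → False := by
    intro a c b d h1 h2 h3 h4 e1 e2
    exact hcross (F a) (F b) (F c) (F d) e1 e2
      ⟨hFmono a c h1 (by omega), hFmono c b h2 (by omega), hFmono b d h3 h4⟩
  -- consecutive vertices are adjacent
  have hcons : ∀ i, i + 1 < n → G.Adj (F i) (F (i + 1)) := by
    intro i hilt
    by_contra hno
    have hcrossedge : ∃ k, k ≤ i ∧ ∃ b, i < b ∧ b < n ∧ G.Adj (F k) (F b) := by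
      obtain ⟨a, ha, b, hb, hab⟩ := earCrossEdge hconn {v : V | ∃ k, k ≤ i ∧ F k = v}
        (x := F i) (y := F (i + 1)) ⟨i, le_rfl, rfl⟩ (by
          rintro ⟨k, hk, hke⟩
          have := hFinj k (by omega) (i + 1) hilt hke
          omega)
      obtain ⟨k, hk, rfl⟩ := ha
      obtain ⟨m, hm, rfl⟩ := hFsurj b
      refine ⟨k, hk, m, ?_, hm, hab⟩
      by_contra hmle
      exact hb ⟨m, by omega, rfl⟩
    set A : Finset ℕ := (Finset.range n).filter
      (fun a => a ≤ i ∧ ∃ b, i < b ∧ b < n ∧ G.Adj (F a) (F b)) with hAdef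
    have hAne : A.Nonempty := by
      obtain ⟨k, hk, hb⟩ := hcrossedge
      exact ⟨k, Finset.mem_filter.mpr ⟨Finset.mem_range.mpr (by omega), hk, hb⟩⟩
    obtain ⟨ha₀r, ha₀i, b₁, hb₁i, hb₁n, hb₁adj⟩ := Finset.mem_filter.mp (A.max'_mem hAne)
    set a₀ := A.max' hAne with ha₀def
    have ha₀n : a₀ < n := Finset.mem_range.mp ha₀r
    have hmax : ∀ k, k ≤ i → ∀ b, i < b → b < n → G.Adj (F k) (F b) → k ≤ a₀ := by
      intro k hk b h1 h2 h3
      exact Finset.le_max' A k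
        (Finset.mem_filter.mpr ⟨Finset.mem_range.mpr (by omega), hk, b, h1, h2, h3⟩)
    rcases Nat.lt_or_ge a₀ i with hlt | hge
    · refine earCutAbsurd (hcut (F a₀)) {x : V | ∃ k, a₀ < k ∧ k ≤ i ∧ F k = x}
        (x := F i) (y := F (i + 1)) ⟨i, hlt, le_rfl, rfl⟩ ?_ ?_ ?_ ?_
      · intro h; have := hFinj i (by omega) a₀ (by omega) h; omega
      · intro h; have := hFinj (i + 1) hilt a₀ (by omega) h; omega
      · rintro ⟨k, h1', h2', h3'⟩; have := hFinj k (by omega) (i + 1) hilt h3'; omega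
      · rintro a b hav hbv hadj ⟨k, hk1, hk2, rfl⟩
        obtain ⟨m, hm, rfl⟩ := hFsurj b
        have hmne : m ≠ a₀ := fun h => hbv (by rw [h])
        rcases Nat.lt_or_ge i m with him | him
        · exact absurd (hmax k hk2 m him hm hadj) (by omega)
        · rcases Nat.lt_or_ge m a₀ with hma | hma
          · exact (hnc4 m a₀ k b₁ hma (by omega) (by omega) hb₁n hadj.symm hb₁adj).elim
          · exact ⟨m, by omega, him, rfl⟩
    · have ha₀eq : a₀ = i := le_antisymm ha₀i hge
      rw [ha₀eq] at hb₁adj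
      have hb₁ne : b₁ ≠ i + 1 := fun h => hno (h ▸ hb₁adj)
      set B : Finset ℕ := (Finset.range n).filter
        (fun t => i < t ∧ ∃ a, a ≤ i ∧ G.Adj (F a) (F t)) with hBdef
      have hBne : B.Nonempty :=
        ⟨b₁, Finset.mem_filter.mpr ⟨Finset.mem_range.mpr hb₁n, hb₁i, i, le_rfl, hb₁adj⟩⟩
      obtain ⟨hb₀r, hb₀i, a₁, ha₁i, ha₁adj⟩ := Finset.mem_filter.mp (B.min'_mem hBne)
      set b₀ := B.min' hBne with hb₀def
      have hb₀n : b₀ < n := Finset.mem_range.mp hb₀r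
      have hmin : ∀ t, i < t → t < n → (∃ a, a ≤ i ∧ G.Adj (F a) (F t)) → b₀ ≤ t := by
        intro t h1' h2' h3'
        exact Finset.min'_le B t (Finset.mem_filter.mpr ⟨Finset.mem_range.mpr h2', h1', h3'⟩)
      rcases Nat.eq_or_lt_of_le (show i + 1 ≤ b₀ by omega) with heq | hgt
      · have ha₁ne : a₁ ≠ i := by
          intro h; rw [h, ← heq] at ha₁adj; exact hno ha₁adj
        rw [← heq] at ha₁adj
        exact hnc4 a₁ i (i + 1) b₁ (by omega) (by omega) (by omega) hb₁n ha₁adj hb₁adj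
      · refine earCutAbsurd (hcut (F b₀)) {x : V | ∃ k, i < k ∧ k < b₀ ∧ F k = x}
          (x := F (i + 1)) (y := F i) ⟨i + 1, by omega, hgt, rfl⟩ ?_ ?_ ?_ ?_
        · intro h; have := hFinj (i + 1) hilt b₀ hb₀n h; omega
        · intro h; have := hFinj i (by omega) b₀ hb₀n h; omega
        · rintro ⟨k, h1', h2', h3'⟩; have := hFinj k (by omega) i (by omega) h3'; omega
        · rintro a b hav hbv hadj ⟨k, hk1, hk2, rfl⟩
          obtain ⟨m, hm, rfl⟩ := hFsurj b
          have hmne : m ≠ b₀ := fun h => hbv (by rw [h])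
          rcases Nat.lt_or_ge i m with him | him
          · rcases Nat.lt_or_ge m b₀ with h' | h'
            · exact ⟨m, him, h', rfl⟩
            · exact (hnc4 a₁ k b₀ m (by omega) hk2 (by omega) hm ha₁adj hadj).elim
          · exact absurd (hmin k hk1 (by omega) ⟨m, him, hadj.symm⟩) (by omega)
  -- the wrap-around edge
  have hwrap : G.Adj (F 0) (F (n - 1)) := by
    by_contra hno
    have hnb : ∃ t, t < n ∧ G.Adj (F 0) (F t) := by
      obtain ⟨y, hy⟩ := Fintype.exists_ne_of_one_lt_card (by omega) (F 0)
      obtain ⟨a, ha, b, hb, hab⟩ := earCrossEdge hconn {v : V | v = F 0}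
        (x := F 0) (y := y) rfl hy
      obtain ⟨m, hm, rfl⟩ := hFsurj b
      rw [Set.mem_setOf_eq] at ha
      exact ⟨m, hm, ha ▸ hab⟩
    set B := (Finset.range n).filter (fun t => G.Adj (F 0) (F t)) with hBdef
    have hBne : B.Nonempty := by
      obtain ⟨t, h1', h2'⟩ := hnb
      exact ⟨t, Finset.mem_filter.mpr ⟨Finset.mem_range.mpr h1', h2'⟩⟩
    obtain ⟨hb₀r, hb₀adj⟩ := Finset.mem_filter.mp (B.max'_mem hBne)
    set b₀ := B.max' hBne with hb₀def
    have hb₀n : b₀ < n := Finset.mem_range.mp hb₀r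
    have hmax : ∀ t, t < n → G.Adj (F 0) (F t) → t ≤ b₀ := fun t h1' h2' =>
      Finset.le_max' B t (Finset.mem_filter.mpr ⟨Finset.mem_range.mpr h1', h2'⟩)
    have hb₀0 : b₀ ≠ 0 := by
      intro h; rw [h] at hb₀adj; exact G.loopless.irrefl _ hb₀adj
    have hb₀n1 : b₀ ≠ n - 1 := fun h => hno (h ▸ hb₀adj)
    refine earCutAbsurd (hcut (F b₀)) {x : V | ∃ k, b₀ < k ∧ k < n ∧ F k = x}
      (x := F (n - 1)) (y := F 0) ⟨n - 1, by omega, by omega, rfl⟩ ?_ ?_ ?_ ?_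
    · intro h; have := hFinj (n - 1) (by omega) b₀ hb₀n h; omega
    · intro h; have := hFinj 0 (by omega) b₀ hb₀n h; omega
    · rintro ⟨k, h1', h2', h3'⟩; have := hFinj k h2' 0 (by omega) h3'; omega
    · rintro a b hav hbv hadj ⟨k, hk1, hk2, rfl⟩
      obtain ⟨m, hm, rfl⟩ := hFsurj b
      have hmne : m ≠ b₀ := fun h => hbv (by rw [h])
      rcases Nat.lt_or_ge b₀ m with h' | h'
      · exact ⟨m, h', hm, rfl⟩
      · rcases Nat.eq_zero_or_pos m with rfl | hm0
        · exact absurd (hmax k hk2 hadj.symm) (by omega)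
        · exact (hnc4 0 m b₀ k (by omega) (by omega) hk1 hk2 hb₀adj hadj.symm).elim
  -- degree helpers
  have hdeg2 : ∀ k kl kr, kl < n → kr < n → kl ≠ kr → G.Adj (F k) (F kl) → G.Adj (F k) (F kr) →
      (∀ m, m < n → G.Adj (F k) (F m) → m = kl ∨ m = kr) → G.degree (F k) = 2 := by
    intro k kl kr hkl hkr hne h1' h2' hall
    have hnbr : G.neighborFinset (F k) = {F kl, F kr} := by
      ext y
      rw [SimpleGraph.mem_neighborFinset, Finset.mem_insert, Finset.mem_singleton]
      constructor
      · intro hy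
        obtain ⟨m, hm, rfl⟩ := hFsurj y
        rcases hall m hm hy with h | h
        · exact Or.inl (by rw [h])
        · exact Or.inr (by rw [h])
      · rintro (rfl | rfl)
        exacts [h1', h2']
    rw [← SimpleGraph.card_neighborFinset_eq_degree, hnbr]
    exact Finset.card_pair (fun h => hne (hFinj kl hkl kr hkr h))
  have hdeg3 : ∀ k k1 k2 k3, k1 < n → k2 < n → k3 < n → k1 ≠ k2 → k1 ≠ k3 → k2 ≠ k3 →
      G.Adj (F k) (F k1) → G.Adj (F k) (F k2) → G.Adj (F k) (F k3) → 3 ≤ G.degree (F k) := by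
    intro k k1 k2 k3 hk1 hk2 hk3 h12 h13 h23 e1 e2 e3
    have hsub : ({F k1, F k2, F k3} : Finset V) ⊆ G.neighborFinset (F k) := by
      intro y hy
      rw [Finset.mem_insert, Finset.mem_insert, Finset.mem_singleton] at hy
      rw [SimpleGraph.mem_neighborFinset]
      rcases hy with rfl | rfl | rfl
      exacts [e1, e2, e3]
    have hcard3 : ({F k1, F k2, F k3} : Finset V).card = 3 := by
      rw [Finset.card_insert_of_notMem, Finset.card_insert_of_notMem, Finset.card_singleton]
      · rw [Finset.mem_singleton]
        exact fun h => h23 (hFinj k2 hk2 k3 hk3 h)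
      · rw [Finset.mem_insert, Finset.mem_singleton]
        rintro (h | h)
        · exact h12 (hFinj k1 hk1 k2 hk2 h)
        · exact h13 (hFinj k1 hk1 k3 hk3 h)
    calc (3 : ℕ) = ({F k1, F k2, F k3} : Finset V).card := hcard3.symm
      _ ≤ (G.neighborFinset (F k)).card := Finset.card_le_card hsub
      _ = G.degree (F k) := SimpleGraph.card_neighborFinset_eq_degree G (F k)
  -- chords
  set CH : Finset (ℕ × ℕ) := ((Finset.range n) ×ˢ (Finset.range n)).filter
    (fun q => q.1 < q.2 ∧ G.Adj (F q.1) (F q.2) ∧ q.2 ≠ q.1 + 1 ∧ ¬(q.1 = 0 ∧ q.2 = n - 1))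
    with hCHdef
  have hclass : ∀ s t, s < t → t < n → G.Adj (F s) (F t) →
      t = s + 1 ∨ (s = 0 ∧ t = n - 1) ∨ (s, t) ∈ CH := by
    intro s t h1' h2' h3'
    by_cases hc1 : t = s + 1
    · exact Or.inl hc1
    by_cases hc2 : s = 0 ∧ t = n - 1
    · exact Or.inr (Or.inl hc2)
    exact Or.inr (Or.inr (Finset.mem_filter.mpr
      ⟨Finset.mem_product.mpr ⟨Finset.mem_range.mpr (by omega), Finset.mem_range.mpr h2'⟩,
       h1', h3', hc1, hc2⟩))
  have hCHne : CH.Nonempty := by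
    rw [Finset.nonempty_iff_ne_empty]
    intro hemp
    apply hnc
    refine ⟨hconn, fun v => ?_⟩
    obtain ⟨k, hk, rfl⟩ := hFsurj v
    by_cases hk0 : k = 0
    · subst hk0
      refine hdeg2 0 (n - 1) 1 (by omega) (by omega) (by omega) hwrap (hcons 0 (by omega)) ?_
      intro m hm hadj
      rcases Nat.eq_zero_or_pos m with rfl | hm0
      · exact (G.loopless.irrefl _ hadj).elim
      rcases hclass 0 m (by omega) hm hadj with h | h | h
      · right; omega
      · left; omega
      · rw [hemp] at h; exact absurd h (Finset.notMem_empty _)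
    by_cases hkn : k = n - 1
    · subst hkn
      refine hdeg2 (n - 1) (n - 2) 0 (by omega) (by omega) (by omega) ?_ hwrap.symm ?_
      · have h := hcons (n - 2) (by omega)
        rw [show n - 2 + 1 = n - 1 by omega] at h
        exact h.symm
      · intro m hm hadj
        rcases lt_trichotomy m (n - 1) with h | h | h
        · rcases hclass m (n - 1) h (by omega) hadj.symm with h' | h' | h'
          · left; omega
          · right; omega
          · rw [hemp] at h'; exact absurd h' (Finset.notMem_empty _)
        · rw [h] at hadj; exact (G.loopless.irrefl _ hadj).elim
        · omega
    · refine hdeg2 k (k - 1) (k + 1) (by omega) (by omega) (by omega) ?_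
        (hcons k (by omega)) ?_
      · have h := hcons (k - 1) (by omega)
        rw [show k - 1 + 1 = k by omega] at h
        exact h.symm
      · intro m hm hadj
        rcases lt_trichotomy m k with h | h | h
        · rcases hclass m k h hk hadj.symm with h' | h' | h'
          · left; omega
          · omega
          · rw [hemp] at h'; exact absurd h' (Finset.notMem_empty _)
        · rw [h] at hadj; exact (G.loopless.irrefl _ hadj).elim
        · rcases hclass k m h hm hadj with h' | h' | h'
          · right; omega
          · omega
          · rw [hemp] at h'; exact absurd h' (Finset.notMem_empty _)
  obtain ⟨q, hqmem, hqmin⟩ := Finset.exists_min_image CH (fun q => q.2 - q.1) hCHne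
  obtain ⟨i, j⟩ := q
  obtain ⟨hqr, hij, hadjij, hij1, hijne⟩ := Finset.mem_filter.mp hqmem
  have hjn : j < n := Finset.mem_range.mp (Finset.mem_product.mp hqr).2
  have hij2 : i + 2 ≤ j := by omega
  have hmin' : ∀ a b : ℕ, (a, b) ∈ CH → j - i ≤ b - a := fun a b h => hqmin (a, b) h
  have hin : ∀ a b, i ≤ a → a < b → b ≤ j → G.Adj (F a) (F b) → b = a + 1 ∨ (a = i ∧ b = j) := by
    intro a b h1' h2' h3' h4'
    rcases hclass a b h2' (by omega) h4' with h | h | h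
    · exact Or.inl h
    · exfalso; apply hijne; constructor <;> omega
    · have := hmin' a b h
      right; constructor <;> omega
  have hinternal : ∀ k, i < k → k < j → G.degree (F k) = 2 := by
    intro k h1' h2'
    refine hdeg2 k (k - 1) (k + 1) (by omega) (by omega) (by omega) ?_ (hcons k (by omega)) ?_
    · have h := hcons (k - 1) (by omega)
      rw [show k - 1 + 1 = k by omega] at h
      exact h.symm
    · intro m hm hadj
      rcases Nat.lt_or_ge m i with hmi | hmi
      · exact (hnc4 m i k j hmi h1' h2' hjn hadj.symm hadjij).elim
      rcases Nat.lt_or_ge j m with hjm | hjm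
      · exact (hnc4 i k j m h1' h2' hjm hm hadjij hadj).elim
      rcases lt_trichotomy m k with h | h | h
      · rcases hin m k hmi h (by omega) hadj.symm with h' | h'
        · left; omega
        · omega
      · rw [h] at hadj; exact (G.loopless.irrefl _ hadj).elim
      · rcases hin k m (by omega) h hjm hadj with h' | h'
        · right; omega
        · omega
  have hdegi : 3 ≤ G.degree (F i) := by
    by_cases h0 : i = 0
    · subst h0
      have hjne : j ≠ n - 1 := fun h => hijne ⟨rfl, h⟩
      exact hdeg3 0 (n - 1) 1 j (by omega) (by omega) (by omega) (by omega)
        (by omega) (by omega) hwrap (hcons 0 (by omega)) hadjij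
    · refine hdeg3 i (i - 1) (i + 1) j (by omega) (by omega) (by omega) (by omega)
        (by omega) (by omega) ?_ (hcons i (by omega)) hadjij
      have h := hcons (i - 1) (by omega)
      rw [show i - 1 + 1 = i by omega] at h
      exact h.symm
  have hdegj : 3 ≤ G.degree (F j) := by
    have hadjj1 : G.Adj (F j) (F (j - 1)) := by
      have h := hcons (j - 1) (by omega)
      rw [show j - 1 + 1 = j by omega] at h
      exact h.symm
    by_cases hjn1 : j = n - 1
    · have hine : i ≠ 0 := fun h => hijne ⟨h, hjn1⟩
      refine hdeg3 j (j - 1) 0 i (by omega) (by omega) (by omega) (by omega)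
        (by omega) (by omega) hadjj1 ?_ hadjij.symm
      rw [hjn1]
      exact hwrap.symm
    · exact hdeg3 j (j - 1) (j + 1) i (by omega) (by omega) (by omega) (by omega)
        (by omega) (by omega) hadjj1 (hcons j (by omega)) hadjij.symm
  -- construction
  set m := j - i with hmdef
  set ll : List V := (List.range' (i + 1) m).map F with hlldef
  have hconslist : F i :: ll = (List.range' i (m + 1)).map F := by
    rw [List.range'_succ, List.map_cons]
  have hconcat : (List.range' i (m + 1)) = List.range' i m ++ [j] := by
    rw [List.range'_concat]
    congr 1
    simp only [List.cons.injEq, and_true]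
    omega
  have hconcat2 : List.range' (i + 1) m = List.range' (i + 1) (m - 1) ++ [j] := by
    rw [show m = (m - 1) + 1 by omega, List.range'_concat]
    congr 2
    omega
  have hllne : ll ≠ [] := by
    intro h
    have := congrArg List.length h
    simp only [hlldef, List.length_map, List.length_range', List.length_nil] at this
    omega
  have hzip : (F i :: ll).zip (ll ++ [F i]) =
      ((List.range' i m).map (fun k => (F k, F (k + 1)))) ++ [(F j, F i)] := by
    have h1' : F i :: ll = (List.range' i m).map F ++ [F j] := by
      rw [hconslist, hconcat, List.map_append]
      simp
    rw [h1', hlldef,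
      List.zip_append (by simp)]
    rw [List.zip_map (f := F) (g := F), earZipRange' m i, List.map_map]
    rfl
  have harc1 : ∀ k, i ≤ k → k < j →
      (F k, F (k + 1)) ∈ (F i :: ll).zip (ll ++ [F i]) := by
    intro k h1' h2'
    rw [hzip]
    apply List.mem_append_left
    rw [List.mem_map]
    exact ⟨k, List.mem_range'_1.mpr ⟨h1', by omega⟩, rfl⟩
  have harc2 : (F j, F i) ∈ (F i :: ll).zip (ll ++ [F i]) := by
    rw [hzip]
    apply List.mem_append_right
    simp
  have hmemchar : ∀ z ∈ F i :: ll, ∃ k, i ≤ k ∧ k ≤ j ∧ F k = z := by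
    intro z hz
    rw [hconslist, List.mem_map] at hz
    obtain ⟨k, hk, rfl⟩ := hz
    rw [List.mem_range'_1] at hk
    exact ⟨k, hk.1, by omega, rfl⟩
  refine ⟨F i, ll, hllne, ?_, ?_, ?_, ?_, ?_, hdegi, ?_⟩
  · rw [hconslist]
    refine List.Nodup.map_on ?_ List.nodup_range'
    intro x hx y hy hxy
    rw [List.mem_range'_1] at hx hy
    exact hFinj x (by omega) y (by omega) hxy
  · rw [hconslist]
    simp only [List.length_map, List.length_range']
    omega
  · refine earChainRange' G.Adj F m i (F i) ?_ ?_
    · intro k hk1 hk2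
      exact hcons k (by omega)
    · rw [show i + m = j by omega]
      exact hadjij.symm
  · intro x hx y hy hadj
    obtain ⟨a, ha1, ha2, rfl⟩ := hmemchar x hx
    obtain ⟨b, hb1, hb2, rfl⟩ := hmemchar y hy
    have hab : a ≠ b := by
      intro h
      rw [h] at hadj
      exact G.loopless.irrefl _ hadj
    rcases lt_or_gt_of_ne hab with h | h
    · rcases hin a b ha1 h hb2 hadj with h' | ⟨h1', h2'⟩
      · left; rw [h']; exact harc1 a ha1 (by omega)
      · right; rw [h1', h2']; exact harc2
    · rcases hin b a hb1 h ha2 hadj.symm with h' | ⟨h1', h2'⟩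
      · right; rw [h']; exact harc1 b hb1 (by omega)
      · left; rw [h1', h2']; exact harc2
  · intro x hx
    have hdl : ll.dropLast = (List.range' (i + 1) (m - 1)).map F := by
      rw [hlldef, ← List.map_dropLast, hconcat2, List.dropLast_concat]
    rw [hdl, List.mem_map] at hx
    obtain ⟨k, hk, rfl⟩ := hx
    rw [List.mem_range'_1] at hk
    exact hinternal k (by omega) (by omega)
  · intro h
    have hgl : ll.getLast h = F j := by
      have hrw : ll = (List.range' (i + 1) (m - 1)).map F ++ [F j] := by
        rw [hlldef, hconcat2, List.map_append]
        simp
      revert h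
      rw [hrw]
      intro h
      exact List.getLast_concat
    rw [hgl]
    exact hdegj
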